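/- Let n ≥ 1, ρ > 0, and suppose f, f⁰ : (0,L) → (ℝ²)ⁿ are continuous with min_{i≠j,z} |f⁰_i(z) − f⁰_j(z)| ≥ 4ρ and min_{σ∈Sₙ} ∑_j |f_j(z) − f⁰_{σ(j)}(z)| ≤ ρ for every z ∈ (0,L). Then there exists a single permutation π ∈ Sₙ, independent of z, such that ∑_j |f_j(z) − f⁰_{π(j)}(z)| = min_{σ∈Sₙ} ∑_j |f_j(z) − f⁰_{σ(j)}(z)| for all z ∈ (0,L). -/

import Mathlib

noncomputable section

abbrev E2 := EuclideanSpace ℝ (Fin 2)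

/-- if the reference configuration `f⁰` is `4ρ`-separated and the matching
distance between `f` and `f⁰` is at most `ρ` at every `z ∈ (0,L)`, then a single
permutation, independent of `z`, realizes the minimal matching for all `z`. -/
theorem stmt16 (n : ℕ) (ρ L : ℝ) (hρ : 0 < ρ) (hL : 0 < L)
    (f f0 : Fin n → ℝ → E2)
    (hf : ∀ j, ContinuousOn (f j) (Set.Ioo 0 L))
    (hf0 : ∀ j, ContinuousOn (f0 j) (Set.Ioo 0 L))
    (hsep : ∀ z ∈ Set.Ioo 0 L, ∀ i j, i ≠ j → 4 * ρ ≤ dist (f0 i z) (f0 j z))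
    (hclose : ∀ z ∈ Set.Ioo 0 L,
      (⨅ σ : Equiv.Perm (Fin n), ∑ j, dist (f j z) (f0 (σ j) z)) ≤ ρ) :
    ∃ p : Equiv.Perm (Fin n), ∀ z ∈ Set.Ioo 0 L,
      ∑ j, dist (f j z) (f0 (p j) z)
        = ⨅ σ : Equiv.Perm (Fin n), ∑ j, dist (f j z) (f0 (σ j) z) := by
  classical
  set S : Set ℝ := Set.Ioo 0 L with hSdef
  set F : Equiv.Perm (Fin n) → ℝ → ℝ :=
    fun σ z => ∑ j, dist (f j z) (f0 (σ j) z) with hFdef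
  have hFcont : ∀ σ, ContinuousOn (F σ) S := fun σ =>
    continuousOn_finset_sum _ fun j _ =>
      continuous_dist.comp_continuousOn ((hf j).prodMk (hf0 (σ j)))
  have hbdd : ∀ z : ℝ, BddBelow (Set.range fun σ : Equiv.Perm (Fin n) => F σ z) :=
    fun z => (Set.finite_range _).bddBelow
  -- the infimum is attained
  have hattain : ∀ z : ℝ, ∃ σ : Equiv.Perm (Fin n), F σ z = ⨅ τ, F τ z := by
    intro z
    obtain ⟨σ, hσ⟩ := Finite.exists_min (fun τ : Equiv.Perm (Fin n) => F τ z)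
    exact ⟨σ, le_antisymm (le_ciInf hσ) (ciInf_le (hbdd z) σ)⟩
  -- minimality is equivalent to being ≤ all others
  have hmin_iff : ∀ (z : ℝ) (σ : Equiv.Perm (Fin n)),
      F σ z = (⨅ τ, F τ z) ↔ ∀ τ, F σ z ≤ F τ z := by
    intro z σ
    constructor
    · intro h τ
      exact h ▸ ciInf_le (hbdd z) τ
    · intro h
      exact le_antisymm (le_ciInf h) (ciInf_le (hbdd z) σ)
  -- uniqueness of the minimizer
  have huniq : ∀ z ∈ S, ∀ σ τ : Equiv.Perm (Fin n),
      F σ z = (⨅ τ, F τ z) → F τ z = (⨅ τ, F τ z) → σ = τ := by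
    intro z hz σ τ hσ hτ
    have hinf : (⨅ τ, F τ z) ≤ ρ := hclose z hz
    have key : ∀ (υ : Equiv.Perm (Fin n)), F υ z = (⨅ τ, F τ z) →
        ∀ j, dist (f j z) (f0 (υ j) z) ≤ ρ := by
      intro υ hυ j
      have h1 : dist (f j z) (f0 (υ j) z) ≤ F υ z :=
        Finset.single_le_sum (f := fun i => dist (f i z) (f0 (υ i) z))
          (fun i _ => dist_nonneg) (Finset.mem_univ j)
      rw [hυ] at h1
      linarith
    refine Equiv.ext fun j => ?_
    by_contra hne
    have hs := hsep z hz (σ j) (τ j) hne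
    have h1 := key σ hσ j
    have h2 := key τ hτ j
    have h3 : dist (f0 (σ j) z) (f0 (τ j) z)
        ≤ dist (f0 (σ j) z) (f j z) + dist (f j z) (f0 (τ j) z) := dist_triangle _ _ _
    rw [dist_comm (f0 (σ j) z) (f j z)] at h3
    linarith
  -- work in the subspace S
  haveI : PreconnectedSpace S := Subtype.preconnectedSpace isPreconnected_Ioo
  set A : Equiv.Perm (Fin n) → Set S :=
    fun σ => {z : S | F σ ↑z = ⨅ τ, F τ ↑z} with hAdef
  have hAclosed : ∀ σ, IsClosed (A σ) := by
    intro σ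
    have : A σ = ⋂ τ, {z : S | F σ ↑z ≤ F τ ↑z} := by
      ext z
      simp only [hAdef, Set.mem_setOf_eq, Set.mem_iInter]
      exact hmin_iff ↑z σ
    rw [this]
    exact isClosed_iInter fun τ =>
      isClosed_le ((hFcont σ).restrict) ((hFcont τ).restrict)
  have hAopen : ∀ σ, IsOpen (A σ) := by
    intro σ
    rw [← isClosed_compl_iff]
    have : (A σ)ᶜ = ⋃ τ : {τ : Equiv.Perm (Fin n) // τ ≠ σ}, A ↑τ := by
      ext z
      simp only [Set.mem_compl_iff, Set.mem_iUnion, hAdef, Set.mem_setOf_eq]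
      constructor
      · intro h
        obtain ⟨τ, hτ⟩ := hattain ↑z
        have hne : τ ≠ σ := fun h' => h (h' ▸ hτ)
        exact ⟨⟨τ, hne⟩, hτ⟩
      · rintro ⟨⟨τ, hne⟩, hτ⟩ hσ
        exact hne (huniq ↑z z.2 τ σ hτ hσ)
    rw [this]
    exact isClosed_iUnion_of_finite fun τ => hAclosed ↑τ
  -- pick a point and its minimizer
  have hz0 : (L / 2 : ℝ) ∈ S := ⟨half_pos hL, half_lt_self hL⟩
  obtain ⟨p, hp⟩ := hattain (L / 2)
  have hne : (A p).Nonempty := ⟨⟨L / 2, hz0⟩, hp⟩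
  have huniv : A p = Set.univ := by
    rcases isClopen_iff.mp ⟨hAclosed p, hAopen p⟩ with h | h
    · exact absurd (h ▸ hne) Set.not_nonempty_empty
    · exact h
  refine ⟨p, fun z hz => ?_⟩
  have : (⟨z, hz⟩ : S) ∈ A p := huniv ▸ Set.mem_univ _
  exact this
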